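/- For real numbers t, k, ω, x with t ≥ k^ω ≥ k ≥ 1, ω ≥ 1, and 0 ≤ x ≤ 1/2, the inequality (1+t)^x ≥ (1/2)^x + ((1+k^ω)^x - (1/2)^x)/k^(ωx) · t^x holds. -/

import Mathlib

open Real Set

lemma aux_key (a x : ℝ) (ha : 1 ≤ a) (hx : x ≤ 1/2) :
    ((1+a)^x - (1/2:ℝ)^x) / a^x ≤ (a/(1+a))^(1-x) := by
  have ha0 : (0:ℝ) < a := lt_of_lt_of_le one_pos ha
  have h1a : (0:ℝ) < 1 + a := by linarith
  have h4 : (1/2:ℝ)^x = (2:ℝ)^(-x) := by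
    rw [Real.rpow_neg (by norm_num), one_div, Real.inv_rpow (by norm_num)]
  have h1 : (1+a:ℝ)^(x-1) ≤ (1/2:ℝ)^x := by
    have h2 : (1+a:ℝ)^(x-1) ≤ (2:ℝ)^(x-1) :=
      Real.rpow_le_rpow_of_nonpos (by norm_num) (by linarith) (by linarith)
    have h3 : (2:ℝ)^(x-1) ≤ (2:ℝ)^(-x) :=
      Real.rpow_le_rpow_of_exponent_le (by norm_num) (by linarith)
    rw [h4]; linarith
  have hax : (0:ℝ) < a^x := Real.rpow_pos_of_pos ha0 x
  rw [div_le_iff₀ hax]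
  have hexp : (a/(1+a))^(1-x) * a^x = a * (1+a)^(x-1) := by
    rw [Real.div_rpow ha0.le h1a.le, div_mul_eq_mul_div, ← Real.rpow_add ha0,
      show 1 - x + x = 1 by ring, Real.rpow_one,
      show (x - 1 : ℝ) = -(1-x) by ring, Real.rpow_neg h1a.le]
    ring
  have hsplit : (1+a:ℝ)^x = (1+a) * (1+a)^(x-1) := by
    rw [show (x:ℝ) = (x-1) + 1 by ring, Real.rpow_add h1a, Real.rpow_one]; ring
  rw [hexp]
  nlinarith [h1]

lemma aux_mono (a x : ℝ) (ha : 1 ≤ a) (hx0 : 0 < x) (hx : x ≤ 1/2) :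
    MonotoneOn (fun u : ℝ => (1+u)^x - (((1+a)^x - (1/2:ℝ)^x)/a^x) * u^x) (Ici a) := by
  have ha0 : (0:ℝ) < a := lt_of_lt_of_le one_pos ha
  set c : ℝ := ((1+a)^x - (1/2:ℝ)^x)/a^x with hc
  apply monotoneOn_of_hasDerivWithinAt_nonneg (convex_Ici a)
    (f' := fun u => x*(1+u)^(x-1)*1 - c*(x*u^(x-1)))
  · apply ContinuousOn.sub
    · exact (continuousOn_const.add continuousOn_id).rpow_const fun u _ => Or.inr hx0.le
    · exact continuousOn_const.mul (continuousOn_id.rpow_const fun u _ => Or.inr hx0.le)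
  · intro u hu
    rw [interior_Ici] at hu
    have hu0 : (0:ℝ) < u := lt_of_le_of_lt ha0.le hu
    have h1u : (0:ℝ) < 1 + u := by linarith
    have h1 : HasDerivAt (fun u : ℝ => (1+u)^x) (x*(1+u)^(x-1)*1) u :=
      (Real.hasDerivAt_rpow_const (p := x) (Or.inl h1u.ne')).comp u
        ((hasDerivAt_id u).const_add 1)
    have h2 : HasDerivAt (fun u : ℝ => c * u^x) (c*(x*u^(x-1))) u :=
      (Real.hasDerivAt_rpow_const (p := x) (Or.inl hu0.ne')).const_mul c
    exact (h1.sub h2).hasDerivWithinAt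
  · intro u hu
    rw [interior_Ici] at hu
    have hu0 : (0:ℝ) < u := lt_of_le_of_lt ha0.le hu
    have h1u : (0:ℝ) < 1 + u := by linarith
    have hux : (0:ℝ) < u^(x-1) := Real.rpow_pos_of_pos hu0 _
    have hbase : a/(1+a) ≤ u/(1+u) := by
      rw [div_le_div_iff₀ (by linarith) h1u]; nlinarith [(show a < u from hu).le]
    have hmono : (a/(1+a))^(1-x) ≤ (u/(1+u))^(1-x) :=
      Real.rpow_le_rpow (by positivity) hbase (by linarith)
    have hckey : c ≤ (u/(1+u))^(1-x) := le_trans (aux_key a x ha hx) hmono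
    have hcalc : (u/(1+u))^(1-x) * u^(x-1) = (1+u)^(x-1) := by
      rw [Real.div_rpow hu0.le h1u.le, div_mul_eq_mul_div, ← Real.rpow_add hu0,
        show 1 - x + (x-1) = 0 by ring, Real.rpow_zero,
        show (x - 1 : ℝ) = -(1-x) by ring, Real.rpow_neg h1u.le, one_div]
    have : c * u^(x-1) ≤ (1+u)^(x-1) := by
      calc c * u^(x-1) ≤ (u/(1+u))^(1-x) * u^(x-1) := by
            exact mul_le_mul_of_nonneg_right hckey hux.le
        _ = (1+u)^(x-1) := hcalc
    nlinarith [this, hx0]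

theorem stmt_0 (t k ω x : ℝ) (hk : 1 ≤ k) (hkω : k ≤ k ^ ω) (ht : k ^ ω ≤ t)
    (hω : 1 ≤ ω) (hx0 : 0 ≤ x) (hx : x ≤ 1 / 2) :
    (1 + t) ^ x ≥ (1 / 2 : ℝ) ^ x + ((1 + k ^ ω) ^ x - (1 / 2 : ℝ) ^ x) / k ^ (ω * x) * t ^ x := by
  have hkx : k ^ (ω * x) = (k ^ ω) ^ x := Real.rpow_mul (by linarith) ω x
  rcases eq_or_lt_of_le hx0 with h0 | h0
  · subst h0
    simp
  · set a : ℝ := k ^ ω with hadef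
    have ha : 1 ≤ a := le_trans hk hkω
    have ha0 : (0:ℝ) < a := lt_of_lt_of_le one_pos ha
    have hax : (0:ℝ) < a^x := Real.rpow_pos_of_pos ha0 x
    have hmono := aux_mono a x ha h0 hx (self_mem_Ici) (ht : a ≤ t) ht
    simp only at hmono
    have hcancel : ((1+a)^x - (1/2:ℝ)^x)/a^x * a^x = (1+a)^x - (1/2:ℝ)^x :=
      div_mul_cancel₀ _ hax.ne'
    rw [hkx]
    have : (a:ℝ) ≤ t := ht
    linarith [hmono]
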